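/- The unique fixed point φ̄ of the return map R = h ∘ h in the Mirollo–Strogatz two-oscillator model is repelling: |R′(φ̄)| > 1. -/

import Mathlib

/-- Mirollo–Strogatz: the unique fixed point `φ̄` (with `h(φ̄) = φ̄`) of the return
map `R = h ∘ h` is repelling: `|R′(φ̄)| > 1`. -/
theorem stmt8 (f g f' f'' : ℝ → ℝ) (ε δ ψ φbar : ℝ)
    (hf0 : f 0 = 0) (hf1 : f 1 = 1)
    (hfd : ∀ φ ∈ Set.Icc (0:ℝ) 1, HasDerivAt f (f' φ) φ)
    (hf'pos : ∀ φ ∈ Set.Icc (0:ℝ) 1, 0 < f' φ)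
    (hfd2 : ∀ φ ∈ Set.Icc (0:ℝ) 1, HasDerivAt f' (f'' φ) φ)
    (hf''neg : ∀ φ ∈ Set.Icc (0:ℝ) 1, f'' φ < 0)
    (hmap : ∀ φ ∈ Set.Icc (0:ℝ) 1, f φ ∈ Set.Icc (0:ℝ) 1)
    (hg : ∀ y ∈ Set.Icc (0:ℝ) 1, g y ∈ Set.Icc (0:ℝ) 1 ∧ f (g y) = y)
    (hgf : ∀ φ ∈ Set.Icc (0:ℝ) 1, g (f φ) = φ)
    (hε : ε ∈ Set.Ioo (0:ℝ) 1)
    (hδ : δ = 1 - g (1 - ε))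
    (hψ₁ : δ < ψ) (hψ₂ : ψ < 1)
    (hψ : g (ε + f (1 - ψ)) = δ)
    (hdom : φbar ∈ Set.Ioo δ ψ)
    (hfix : g (ε + f (1 - φbar)) = φbar) :
    ∃ d : ℝ, HasDerivAt (fun x => g (ε + f (1 - g (ε + f (1 - x))))) d φbar ∧
      1 < |d| := by
  obtain ⟨hε0, hε1⟩ := hε
  obtain ⟨hd1, hd2⟩ := hdom
  -- basic domain facts
  have h1ε : (1 - ε) ∈ Set.Icc (0:ℝ) 1 := ⟨by linarith, by linarith⟩
  have hg1ε := hg _ h1ε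
  have hδ0 : 0 ≤ δ := by
    rw [hδ]; linarith [hg1ε.1.2]
  have hφ01 : φbar ∈ Set.Ioo (0:ℝ) 1 := ⟨lt_of_le_of_lt hδ0 hd1, lt_trans hd2 hψ₂⟩
  have hφIcc : φbar ∈ Set.Icc (0:ℝ) 1 := ⟨hφ01.1.le, hφ01.2.le⟩
  have h1φIcc : (1 - φbar) ∈ Set.Icc (0:ℝ) 1 := ⟨by linarith [hφ01.2], by linarith [hφ01.1]⟩
  -- f strictly monotone on [0,1]
  have hfmono : StrictMonoOn f (Set.Icc (0:ℝ) 1) := by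
    apply strictMonoOn_of_deriv_pos (convex_Icc 0 1)
    · intro x hx; exact (hfd x hx).continuousAt.continuousWithinAt
    · intro x hx
      rw [interior_Icc] at hx
      have hx' : x ∈ Set.Icc (0:ℝ) 1 := ⟨hx.1.le, hx.2.le⟩
      rw [(hfd x hx').deriv]
      exact hf'pos x hx'
  -- f' strictly antitone on [0,1]
  have hf'anti : StrictAntiOn f' (Set.Icc (0:ℝ) 1) := by
    apply strictAntiOn_of_deriv_neg (convex_Icc 0 1)
    · intro x hx; exact (hfd2 x hx).continuousAt.continuousWithinAt
    · intro x hx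
      rw [interior_Icc] at hx
      have hx' : x ∈ Set.Icc (0:ℝ) 1 := ⟨hx.1.le, hx.2.le⟩
      rw [(hfd2 x hx').deriv]
      exact hf''neg x hx'
  -- the argument of g is f φbar
  have harg : ε + f (1 - φbar) ∈ Set.Icc (0:ℝ) 1 := by
    constructor
    · have := (hmap _ h1φIcc).1; linarith
    · have h1φlt : 1 - φbar < g (1 - ε) := by linarith [hδ ▸ hd1]
      have := hfmono h1φIcc hg1ε.1 h1φlt
      rw [hg1ε.2] at this
      linarith
  have hkey : ε + f (1 - φbar) = f φbar := by
    have := (hg _ harg).2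
    rw [hfix] at this
    exact this.symm
  -- f φbar ∈ (0,1)
  have hfφ : f φbar ∈ Set.Ioo (0:ℝ) 1 := by
    constructor
    · have := hfmono (Set.left_mem_Icc.2 zero_le_one) hφIcc hφ01.1; rwa [hf0] at this
    · have := hfmono hφIcc (Set.right_mem_Icc.2 zero_le_one) hφ01.2; rwa [hf1] at this
  -- 1 - φbar < φbar
  have hhalf : 1 - φbar < φbar := by
    by_contra h
    push_neg at h
    have := hfmono.monotoneOn hφIcc h1φIcc h
    linarith
  -- g strictly monotone on [0,1]
  have hgmono : StrictMonoOn g (Set.Icc (0:ℝ) 1) := by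
    intro y₁ h₁ y₂ h₂ hlt
    by_contra h
    push_neg at h
    have := hfmono.monotoneOn (hg _ h₂).1 (hg _ h₁).1 h
    rw [(hg _ h₁).2, (hg _ h₂).2] at this
    linarith
  -- continuity of g at f φbar
  have hIccnhds : Set.Icc (0:ℝ) 1 ∈ nhds (f φbar) :=
    mem_nhds_iff.2 ⟨Set.Ioo 0 1, Set.Ioo_subset_Icc_self, isOpen_Ioo, hfφ⟩
  have hgcont : ContinuousAt g (f φbar) := by
    apply hgmono.continuousAt_of_image_mem_nhds hIccnhds
    have hsub : Set.Icc (0:ℝ) 1 ⊆ g '' Set.Icc (0:ℝ) 1 := by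
      intro x hx
      exact ⟨f x, hmap x hx, hgf x hx⟩
    have : g (f φbar) = φbar := hgf _ hφIcc
    rw [this]
    exact Filter.mem_of_superset
      (mem_nhds_iff.2 ⟨Set.Ioo 0 1, Set.Ioo_subset_Icc_self, isOpen_Ioo, hφ01⟩) hsub
  -- derivative of g at f φbar
  have hgφ : g (f φbar) = φbar := hgf _ hφIcc
  have hf'ne : f' φbar ≠ 0 := (hf'pos _ hφIcc).ne'
  have hgd : HasDerivAt g (f' φbar)⁻¹ (f φbar) := by
    apply HasDerivAt.of_local_left_inverse hgcont _ hf'ne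
    · filter_upwards [mem_nhds_iff.2 ⟨Set.Ioo (0:ℝ) 1, Set.Ioo_subset_Icc_self, isOpen_Ioo, hfφ⟩]
        with y hy using (hg y hy).2
    · rw [hgφ]; exact hfd _ hφIcc
  -- derivative of h at φbar
  set c : ℝ := (f' φbar)⁻¹ * (-(f' (1 - φbar))) with hc
  have hhd : HasDerivAt (fun x => g (ε + f (1 - x))) c φbar := by
    have hinner : HasDerivAt (fun x => ε + f (1 - x)) (-(f' (1 - φbar))) φbar := by
      have h1 : HasDerivAt (fun x : ℝ => 1 - x) (-1 : ℝ) φbar := by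
        simpa using (hasDerivAt_id φbar).const_sub 1
      have h2 := (hfd _ h1φIcc).comp φbar h1
      simpa using h2.const_add ε
    have hgd' : HasDerivAt g (f' φbar)⁻¹ ((fun x => ε + f (1 - x)) φbar) := by
      simp only []
      rw [hkey]
      exact hgd
    exact hgd'.comp φbar hinner
  -- derivative of h ∘ h
  have hhfix : (fun x => g (ε + f (1 - x))) φbar = φbar := hfix
  have hRd : HasDerivAt (fun x => g (ε + f (1 - g (ε + f (1 - x))))) (c * c) φbar := by
    have houter : HasDerivAt (fun x => g (ε + f (1 - x))) c
        ((fun x => g (ε + f (1 - x))) φbar) := by rw [hhfix]; exact hhd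
    have := houter.comp φbar hhd; exact this
  refine ⟨c * c, hRd, ?_⟩
  -- |c| > 1
  have hlt : f' φbar < f' (1 - φbar) := hf'anti h1φIcc hφIcc hhalf
  have hp1 := hf'pos _ hφIcc
  have hp2 := hf'pos _ h1φIcc
  have hcabs : 1 < |c| := by
    rw [hc, abs_mul, abs_neg, abs_of_pos (inv_pos.2 hp1), abs_of_pos hp2]
    rw [inv_mul_eq_div, lt_div_iff₀ hp1]
    linarith
  calc (1:ℝ) = 1 * 1 := (one_mul 1).symm
    _ < |c| * |c| := by
        apply mul_lt_mul hcabs hcabs.le one_pos (abs_nonneg c)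
    _ = |c * c| := (abs_mul c c).symm
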